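/- Let K be a compact Hausdorff metric space with no isolated points and X a Banach space. Then zero is the only left symmetric point in C(K, X). -/

import Mathlib

open Topology Filter

theorem left_symmetric_eq_zero_of_no_isolated {𝕜 K X : Type*} [RCLike 𝕜] [MetricSpace K]
    [CompactSpace K] (hK : ∀ k : K, (𝓝[≠] k).NeBot)
    [NormedAddCommGroup X] [NormedSpace 𝕜 X] [CompleteSpace X] :
    ∀ f : C(K, X),
      (∀ g : C(K, X), (∀ lam : 𝕜, ‖f + lam • g‖ ≥ ‖f‖) →
        ∀ lam : 𝕜, ‖g + lam • f‖ ≥ ‖g‖) → f = 0 := by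
  intro f hf
  by_contra hne
  have hKne : Nonempty K := by
    by_contra h
    rw [not_nonempty_iff] at h
    exact hne (ContinuousMap.ext fun k => (h.false k).elim)
  have hMpos : (0:ℝ) < ‖f‖ := norm_pos_iff.mpr hne
  obtain ⟨k₀, -, hk₀⟩ := isCompact_univ.exists_isMaxOn Set.univ_nonempty
      (continuous_norm.comp f.continuous).continuousOn
  have hk0 : ‖f k₀‖ = ‖f‖ := le_antisymm (f.norm_coe_le_norm k₀)
    ((ContinuousMap.norm_le f (norm_nonneg _)).mpr fun k => hk₀ (Set.mem_univ k))
  -- find k₁ ≠ k₀ with ‖f k₁‖ > 0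
  have hUopen : IsOpen {k : K | 0 < ‖f k‖} :=
    isOpen_lt continuous_const (continuous_norm.comp f.continuous)
  have hUmem : {k : K | 0 < ‖f k‖} ∈ 𝓝[≠] k₀ :=
    nhdsWithin_le_nhds (hUopen.mem_nhds (by simp only [Set.mem_setOf_eq, hk0]; exact hMpos))
  haveI := hK k₀
  obtain ⟨k₁, hk₁pos, hk₁ne⟩ :=
    Filter.nonempty_of_mem (Filter.inter_mem hUmem self_mem_nhdsWithin)
  simp only [Set.mem_compl_iff, Set.mem_singleton_iff] at hk₁ne
  set φ : K → ℝ := fun k => min (dist k k₀) 1 with hφ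
  have hφcont : Continuous φ := (continuous_id.dist continuous_const).min continuous_const
  have hφ0 : ∀ k, 0 ≤ φ k := fun k => le_min dist_nonneg zero_le_one
  have hφ1 : ∀ k, φ k ≤ 1 := fun k => min_le_right _ _
  have hφk₀ : φ k₀ = 0 := by simp [hφ]
  have hφk₁ : 0 < φ k₁ := lt_min (dist_pos.mpr hk₁ne) one_pos
  set g : C(K, X) := ⟨fun k => ((φ k : ℝ) : 𝕜) • f k,
    ((RCLike.continuous_ofReal).comp hφcont).smul f.continuous⟩ with hg
  have hgapp : ∀ k, g k = ((φ k : ℝ) : 𝕜) • f k := fun k => rfl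
  have hgnorm : ∀ k, ‖g k‖ = φ k * ‖f k‖ := by
    intro k
    rw [hgapp, norm_smul, RCLike.norm_ofReal, abs_of_nonneg (hφ0 k)]
  have hfg : ∀ lam : 𝕜, ‖f + lam • g‖ ≥ ‖f‖ := by
    intro lam
    have : (f + lam • g) k₀ = f k₀ := by
      simp [hgapp, hφk₀]
    calc ‖f‖ = ‖(f + lam • g) k₀‖ := by rw [this, hk0]
      _ ≤ ‖f + lam • g‖ := ContinuousMap.norm_coe_le_norm _ _
  have h := hf g hfg
  set N : ℝ := ‖g‖ with hN
  have hNpos : 0 < N := by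
    calc (0:ℝ) < φ k₁ * ‖f k₁‖ := mul_pos hφk₁ hk₁pos
      _ = ‖g k₁‖ := (hgnorm k₁).symm
      _ ≤ N := ContinuousMap.norm_coe_le_norm _ _
  have hNle : N ≤ ‖f‖ := by
    apply (ContinuousMap.norm_le g hMpos.le).mpr
    intro k
    rw [hgnorm]
    calc φ k * ‖f k‖ ≤ 1 * ‖f‖ :=
      mul_le_mul (hφ1 k) (f.norm_coe_le_norm k) (norm_nonneg _) zero_le_one
      _ = ‖f‖ := one_mul _
  set c : ℝ := N / (4 * ‖f‖) with hc
  have hcpos : 0 < c := div_pos hNpos (by linarith)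
  have hcf : c * ‖f‖ = N / 4 := by
    field_simp [hc]
    rw [hc, div_mul_eq_mul_div, div_mul_eq_mul_div, div_eq_iff (ne_of_gt (by linarith))]
    ring
  have hcle : c ≤ 1/4 := by
    rw [hc, div_le_iff₀ (by linarith)]
    linarith
  have hkey := h ((-c : ℝ) : 𝕜)
  have hbound : ‖g + ((-c : ℝ) : 𝕜) • f‖ ≤ N - c * N / 2 := by
    apply (ContinuousMap.norm_le _ (by nlinarith)).mpr
    intro k
    have happ : (g + ((-c : ℝ) : 𝕜) • f) k = ((φ k - c : ℝ) : 𝕜) • f k := by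
      simp [hgapp, sub_smul, sub_eq_add_neg, add_smul]
    rw [happ, norm_smul, RCLike.norm_ofReal]
    have hfk : ‖f k‖ ≤ ‖f‖ := f.norm_coe_le_norm k
    have hgk : φ k * ‖f k‖ ≤ N := by rw [← hgnorm]; exact ContinuousMap.norm_coe_le_norm _ _
    have hfk0 : 0 ≤ ‖f k‖ := norm_nonneg _
    rcases le_or_gt (φ k * ‖f k‖) (N/2) with hcase | hcase
    · have : |φ k - c| ≤ φ k + c := by
        rw [abs_le]; constructor <;> [linarith [hφ0 k]; linarith]
      calc |φ k - c| * ‖f k‖ ≤ (φ k + c) * ‖f k‖ :=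
            mul_le_mul_of_nonneg_right this hfk0
        _ = φ k * ‖f k‖ + c * ‖f k‖ := by ring
        _ ≤ N/2 + N/4 := by
            have : c * ‖f k‖ ≤ c * ‖f‖ := mul_le_mul_of_nonneg_left hfk hcpos.le
            linarith [hcf ▸ this]
        _ ≤ N - c * N / 2 := by nlinarith
    · have hcfk : c * ‖f k‖ ≤ N/4 := by
        rw [← hcf]; exact mul_le_mul_of_nonneg_left hfk hcpos.le
      have h1 : φ k * ‖f k‖ ≤ 1 * ‖f k‖ := mul_le_mul_of_nonneg_right (hφ1 k) hfk0
      have hfkN : N/2 ≤ ‖f k‖ := by linarith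
      have hφc : c ≤ φ k := by
        by_contra hcon
        push_neg at hcon
        have := mul_le_mul_of_nonneg_right hcon.le hfk0
        linarith
      have h2 : c * (N/2) ≤ c * ‖f k‖ := mul_le_mul_of_nonneg_left hfkN hcpos.le
      rw [abs_of_nonneg (by linarith)]
      calc (φ k - c) * ‖f k‖ = φ k * ‖f k‖ - c * ‖f k‖ := by ring
        _ ≤ N - c * (N/2) := by linarith
        _ = N - c * N / 2 := by ring
  have : N ≤ N - c * N / 2 := le_trans hkey hbound
  nlinarith
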